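/- Let δ be an algebraic integer of degree 2, a, b integers, p a prime with p ∣ b, p ∤ a, t = v_p(b), k a positive integer with ℓ = v_p(k), and (a + bδ)^k = a_k + b_k δ. Assume p odd, or p = 2 with t ≥ 2, or ℓ = 0. If v_p(a^k - 1) ≥ ℓ + t + 1, then v_p(a_k - 1) ≥ ℓ + t + 1, and in particular v_p(a_k - 1) > v_p(b_k). -/

import Mathlib

/-- coordinates of δ^j in the basis {1, δ}, given δ^2 = u + vδ. -/
private def cdP (u v : ℤ) : ℕ → ℤ × ℤ
  | 0 => (1, 0)
  | n+1 => (u * (cdP u v n).2, (cdP u v n).1 + v * (cdP u v n).2)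

private lemma helper3 : ∀ s : ℕ, 1 ≤ s → s + 2 ≤ 3 ^ s := by
  intro s hs
  induction s with
  | zero => omega
  | succ n ih =>
    rcases Nat.eq_or_lt_of_le hs with h | h
    · simp [← h]
    · have := ih (by omega)
      have : 3 ^ n ≥ 1 := Nat.one_le_pow _ _ (by omega)
      calc n + 1 + 2 ≤ 3 ^ n + 3 ^ n + 3 ^ n := by omega
        _ = 3 ^ (n + 1) := by ring

theorem stmt_16 {R : Type*} [CommRing R] (δ : R) (u v : ℤ)
    (h2 : δ ^ 2 = (u : R) + (v : R) * δ)
    (hindep : ∀ m n m_ n_ : ℤ, (m : R) + (n : R) * δ = (m_ : R) + (n_ : R) * δ → m = m_ ∧ n = n_)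
    (a b : ℤ) (p : ℕ) (hp : p.Prime) (hpb : (p : ℤ) ∣ b) (hpa : ¬ (p : ℤ) ∣ a) (hb : b ≠ 0)
    (t : ℕ) (ht : t = padicValInt p b)
    (k : ℕ) (hk : 0 < k) (ℓ : ℕ) (hℓ : ℓ = padicValNat p k)
    (a_k b_k : ℤ) (hpow : ((a : R) + (b : R) * δ) ^ k = (a_k : R) + (b_k : R) * δ)
    (hcase : Odd p ∨ (p = 2 ∧ 2 ≤ t) ∨ ℓ = 0)
    (hdvd : (p : ℤ) ^ (ℓ + t + 1) ∣ a ^ k - 1) :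
    (p : ℤ) ^ (ℓ + t + 1) ∣ a_k - 1 ∧
      emultiplicity ((p : ℤ)) (a_k - 1) > emultiplicity ((p : ℤ)) b_k := by
  haveI : Fact p.Prime := ⟨hp⟩
  have hpZ : Prime (p : ℤ) := Nat.prime_iff_prime_int.mp hp
  -- basic valuation facts
  have hbt : (p : ℤ) ^ t ∣ b := ht ▸ padicValInt_dvd b
  have hbt1 : ¬ (p : ℤ) ^ (t + 1) ∣ b := by
    rw [padicValInt_dvd_iff]
    rintro (h | h)
    · exact hb h
    · omega
  have ht1 : 1 ≤ t := by
    by_contra h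
    exact hbt1 (by rw [show t + 1 = 1 by omega, pow_one]; exact hpb)
  have hkℓ : p ^ ℓ ∣ k := hℓ ▸ pow_padicValNat_dvd
  have hkℓ1 : ¬ p ^ (ℓ + 1) ∣ k := hℓ ▸ pow_succ_padicValNat_not_dvd hk.ne'
  -- δ powers
  have hδ : ∀ j : ℕ, δ ^ j = ((cdP u v j).1 : R) + ((cdP u v j).2 : R) * δ := by
    intro j
    induction j with
    | zero => simp [cdP]
    | succ n ih =>
      rw [pow_succ, ih]
      show _ = ((u * (cdP u v n).2 : ℤ) : R) + (((cdP u v n).1 + v * (cdP u v n).2 : ℤ) : R) * δ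
      push_cast
      calc (((cdP u v n).1 : R) + ((cdP u v n).2 : R) * δ) * δ
          = ((cdP u v n).1 : R) * δ + ((cdP u v n).2 : R) * δ ^ 2 := by ring
        _ = _ := by rw [h2]; ring
  -- binomial expansion coordinates
  set A : ℤ := ∑ j ∈ Finset.range (k + 1),
      (k.choose j : ℤ) * a ^ (k - j) * b ^ j * (cdP u v j).1 with hA
  set B : ℤ := ∑ j ∈ Finset.range (k + 1),
      (k.choose j : ℤ) * a ^ (k - j) * b ^ j * (cdP u v j).2 with hB
  have hcast : ((a : R) + (b : R) * δ) ^ k = (A : R) + (B : R) * δ := by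
    rw [show (a : R) + (b : R) * δ = (b : R) * δ + (a : R) by ring, add_pow]
    have : ∀ j ∈ Finset.range (k + 1),
        ((b : R) * δ) ^ j * (a : R) ^ (k - j) * (k.choose j : R)
          = (((k.choose j : ℤ) * a ^ (k - j) * b ^ j * (cdP u v j).1 : ℤ) : R)
            + (((k.choose j : ℤ) * a ^ (k - j) * b ^ j * (cdP u v j).2 : ℤ) : R) * δ := by
      intro j _
      rw [mul_pow, hδ j]
      push_cast
      ring
    rw [Finset.sum_congr rfl this, Finset.sum_add_distrib, ← Finset.sum_mul, hA, hB]
    push_cast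
    ring
  obtain ⟨hak, hbk⟩ := hindep a_k b_k A B (by rw [← hpow, hcast])
  -- split sums
  have hsplit : ∀ f : ℕ → ℤ, ∑ j ∈ Finset.range (k + 1), f j
      = f 0 + f 1 + ∑ j ∈ Finset.Ico 2 (k + 1), f j := by
    intro f
    rw [Finset.range_eq_Ico,
      ← Finset.sum_Ico_consecutive f (show 0 ≤ 2 by omega) (show 2 ≤ k + 1 by omega),
      ← Finset.range_eq_Ico]
    rw [Finset.sum_range_succ, Finset.sum_range_one]
  -- key divisibility for the tails
  have hkey : ∀ j : ℕ, 2 ≤ j → (p : ℤ) ^ (ℓ + t + 1) ∣ (k.choose j : ℤ) * b ^ j := by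
    intro j hj
    have hbj : (p : ℤ) ^ (j * t) ∣ b ^ j := by
      rw [mul_comm, pow_mul]
      exact pow_dvd_pow_of_dvd hbt j
    have hjt : j * t = (j - 1) * t + t := by
      have : j - 1 + 1 = j := by omega
      calc j * t = (j - 1 + 1) * t := by rw [this]
        _ = (j - 1) * t + t := by ring
    by_cases hL : ℓ = 0
    · refine dvd_mul_of_dvd_right (dvd_trans (pow_dvd_pow _ ?_) hbj) _
      have h1t : 1 * t ≤ (j - 1) * t := Nat.mul_le_mul (by omega) le_rfl
      omega
    · -- ℓ ≥ 1
      set s := padicValNat p j with hs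
      have hjs : p ^ s ∣ j := pow_padicValNat_dvd
      have hps : p ^ s ≤ j := Nat.le_of_dvd (by omega) hjs
      have hst : s + 1 ≤ (j - 1) * t := by
        rcases hcase with hodd | ⟨hp2, ht2⟩ | h0
        · obtain ⟨m, hm⟩ := hodd
          have hp3 : 3 ≤ p := by have := hp.two_le; omega
          by_cases hs0 : s = 0
          · have : 1 * 1 ≤ (j - 1) * t := Nat.mul_le_mul (by omega) ht1
            omega
          · have h3s : 3 ^ s ≤ p ^ s := Nat.pow_le_pow_left hp3 s
            have hsj : s + 2 ≤ j := le_trans (helper3 s (by omega)) (le_trans h3s hps)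
            have : (s + 1) * 1 ≤ (j - 1) * t := Nat.mul_le_mul (by omega) ht1
            omega
        · have h2s : s < 2 ^ s := Nat.lt_two_pow_self
          have hsj : s + 1 ≤ j := le_trans h2s (hp2 ▸ hps)
          by_cases hs0 : s = 0
          · have : 1 * 1 ≤ (j - 1) * t := Nat.mul_le_mul (by omega) (by omega)
            omega
          · have : s * 2 ≤ (j - 1) * t := Nat.mul_le_mul (by omega) ht2
            omega
        · exact absurd h0 hL
      by_cases hsl : ℓ ≤ s
      · refine dvd_mul_of_dvd_right (dvd_trans (pow_dvd_pow _ ?_) hbj) _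
        omega
      · -- s < ℓ : use valuation of the binomial coefficient
        have hid : k * Nat.choose (k - 1) (j - 1) = Nat.choose k j * j := by
          have h := Nat.add_one_mul_choose_eq (k - 1) (j - 1)
          have e1 : k - 1 + 1 = k := by omega
          have e2 : j - 1 + 1 = j := by omega
          rw [e1, e2] at h
          exact h
        have hdvd_jc : p ^ ℓ ∣ j * Nat.choose k j := by
          rw [mul_comm, ← hid]
          exact hkℓ.mul_right _
        obtain ⟨j', hj'⟩ := hjs
        have hpj' : ¬ p ∣ j' := by
          intro hdj
          apply pow_succ_padicValNat_not_dvd (p := p) (show j ≠ 0 by omega)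
          rw [← hs, hj', pow_succ]
          exact mul_dvd_mul_left _ hdj
        have hcan : p ^ (ℓ - s) ∣ j' * Nat.choose k j := by
          have h1 : p ^ s * p ^ (ℓ - s) ∣ p ^ s * (j' * Nat.choose k j) := by
            rw [← pow_add, show s + (ℓ - s) = ℓ by omega, ← mul_assoc, ← hj']
            exact hdvd_jc
          exact (Nat.mul_dvd_mul_iff_left (pow_pos hp.pos s)).mp h1
        have hcop : Nat.Coprime (p ^ (ℓ - s)) j' :=
          Nat.Coprime.pow_left _ ((Nat.Prime.coprime_iff_not_dvd hp).mpr hpj')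
        have hC : p ^ (ℓ - s) ∣ Nat.choose k j := hcop.dvd_of_dvd_mul_left hcan
        have hCf : (p : ℤ) ^ (ℓ - s) ∣ (k.choose j : ℤ) := by
          exact_mod_cast Int.natCast_dvd_natCast.mpr hC
        have : (p : ℤ) ^ (ℓ - s + j * t) ∣ (k.choose j : ℤ) * b ^ j := by
          rw [pow_add]
          exact mul_dvd_mul hCf hbj
        exact dvd_trans (pow_dvd_pow _ (by omega)) this
  -- decompose A and B
  have hcd0 : cdP u v 0 = (1, 0) := rfl
  have hcd1 : cdP u v 1 = (0, 1) := by simp [cdP]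
  have hAeq : A = a ^ k + ∑ j ∈ Finset.Ico 2 (k + 1),
      (k.choose j : ℤ) * a ^ (k - j) * b ^ j * (cdP u v j).1 := by
    rw [hA, hsplit]
    simp [hcd0, hcd1]
  have hBeq : B = (k : ℤ) * a ^ (k - 1) * b + ∑ j ∈ Finset.Ico 2 (k + 1),
      (k.choose j : ℤ) * a ^ (k - j) * b ^ j * (cdP u v j).2 := by
    rw [hB, hsplit]
    simp [hcd0, hcd1]
  have hSdvd : ∀ g : ℕ → ℤ, (p : ℤ) ^ (ℓ + t + 1) ∣
      ∑ j ∈ Finset.Ico 2 (k + 1), (k.choose j : ℤ) * a ^ (k - j) * b ^ j * g j := by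
    intro g
    refine Finset.dvd_sum fun j hj => ?_
    have hj2 : 2 ≤ j := (Finset.mem_Ico.mp hj).1
    have := (hkey j hj2).mul_right (a ^ (k - j) * g j)
    calc (p : ℤ) ^ (ℓ + t + 1) ∣ (k.choose j : ℤ) * b ^ j * (a ^ (k - j) * g j) := this
      _ = (k.choose j : ℤ) * a ^ (k - j) * b ^ j * g j := by ring
  -- first conclusion
  have hconc1 : (p : ℤ) ^ (ℓ + t + 1) ∣ a_k - 1 := by
    rw [hak, hAeq, show a ^ k + (∑ j ∈ Finset.Ico 2 (k + 1),
        (k.choose j : ℤ) * a ^ (k - j) * b ^ j * (cdP u v j).1) - 1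
      = (a ^ k - 1) + ∑ j ∈ Finset.Ico 2 (k + 1),
        (k.choose j : ℤ) * a ^ (k - j) * b ^ j * (cdP u v j).1 by ring]
    exact dvd_add hdvd (hSdvd _)
  refine ⟨hconc1, ?_⟩
  -- valuation of b_k is exactly ℓ + t
  obtain ⟨k', hk'⟩ := hkℓ
  have hpk' : ¬ (p : ℤ) ∣ (k' : ℤ) := by
    rw [Int.natCast_dvd_natCast]
    intro h
    exact hkℓ1 (by rw [hk', pow_succ]; exact mul_dvd_mul_left _ h)
  obtain ⟨b', hb'⟩ := hbt
  have hpb' : ¬ (p : ℤ) ∣ b' := by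
    intro h
    exact hbt1 (by rw [hb', pow_succ]; exact mul_dvd_mul_left _ h)
  have hkZ' : (k : ℤ) = (p : ℤ) ^ ℓ * (k' : ℤ) := by exact_mod_cast hk'
  have heq : (k : ℤ) * a ^ (k - 1) * b = (p : ℤ) ^ (ℓ + t) * ((k' : ℤ) * a ^ (k - 1) * b') := by
    rw [hkZ', hb', pow_add]; ring
  have hBlow : (p : ℤ) ^ (ℓ + t) ∣ b_k := by
    rw [hbk, hBeq]
    refine dvd_add ?_ (dvd_trans (pow_dvd_pow _ (by omega)) (hSdvd _))
    rw [heq]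
    exact Dvd.intro _ rfl
  have hBhigh : ¬ (p : ℤ) ^ (ℓ + t + 1) ∣ b_k := by
    intro hcon
    have hmain : (p : ℤ) ^ (ℓ + t + 1) ∣ (k : ℤ) * a ^ (k - 1) * b := by
      have h := dvd_sub hcon (dvd_trans (dvd_refl _) ((hSdvd (fun j => (cdP u v j).2))))
      rw [hbk, hBeq] at h
      simpa using h
    rw [heq, pow_succ] at hmain
    have hpdvd : (p : ℤ) ∣ (k' : ℤ) * a ^ (k - 1) * b' := by
      have hne : (p : ℤ) ^ (ℓ + t) ≠ 0 := pow_ne_zero _ (by exact_mod_cast hp.ne_zero)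
      exact (mul_dvd_mul_iff_left hne).mp hmain
    rcases hpZ.dvd_mul.mp hpdvd with h1 | h1
    · rcases hpZ.dvd_mul.mp h1 with h2 | h2
      · exact hpk' h2
      · exact hpa (hpZ.dvd_of_dvd_pow h2)
    · exact hpb' h1
  have hBmul : emultiplicity ((p : ℤ)) b_k = (ℓ + t : ℕ) :=
    emultiplicity_eq_coe.mpr ⟨hBlow, hBhigh⟩
  have hAmul : ((ℓ + t + 1 : ℕ) : ℕ∞) ≤ emultiplicity ((p : ℤ)) (a_k - 1) :=
    le_emultiplicity_of_pow_dvd hconc1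
  rw [hBmul]
  exact lt_of_lt_of_le (by exact_mod_cast Nat.lt_succ_self (ℓ + t)) hAmul
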